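/- arXiv:1905.05660 — 2 statements merged into one kernel-verified Lean document; each statement's English description precedes it below -/
import Mathlib

section
/- In ℝ², let C_1 := {(x,y) : x ≤ 0} and C_2 := {(x,y) : y ≤ 0}, let i_k := 1 if k is even and i_k := 2 if k is odd, and let r_k := 1/(k+1) if k is even and r_k := 1/2^k if k is odd. Define (x_0, y_0) := (1,1) and (x_{k+1}, y_{k+1}) := (x_k, y_k) + ((r_k + d((x_k,y_k), C_{i_k}))/(2 d((x_k,y_k), C_{i_k}))) (P_{C_{i_k}}((x_k,y_k)) − (x_k,y_k)) whenever (x_k,y_k) ∉ C_{i_k}, and (x_{k+1},y_{k+1}) := (x_k,y_k) otherwise. Then r_k → 0 and Σ_{k=0}^∞ r_k = ∞, yet (x_k, y_k) ∉ C_1 ∩ C_2 for every k = 0,1,2,…; in fact x_k = 0 for all k ≥ 1, y_{2k−1} = y_{2k−2}, and y_{2k} = 1/2^{2k} > 0 for all k ≥ 1. -/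
open Metric Filter Finset

lemma dist_formula (q p : EuclideanSpace ℝ (Fin 2)) :
    dist q p = Real.sqrt ((q 0 - p 0)^2 + (q 1 - p 1)^2) := by
  rw [EuclideanSpace.dist_eq, Fin.sum_univ_two]
  simp [Real.dist_eq, sq_abs]

lemma coord_lb (q p : EuclideanSpace ℝ (Fin 2)) (i : Fin 2) (hq : q i ≤ 0) (hp : 0 ≤ p i) :
    p i ≤ dist q p := by
  rw [dist_formula]
  rw [Real.le_sqrt hp (by positivity)]
  fin_cases i <;> simp at hq hp ⊢ <;> nlinarith [sq_nonneg (q 0 - p 0), sq_nonneg (q 1 - p 1)]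

lemma proj_char (C : Set (EuclideanSpace ℝ (Fin 2))) (i : Fin 2)
    (hC : C = {p | p i ≤ 0})
    (P : EuclideanSpace ℝ (Fin 2) → EuclideanSpace ℝ (Fin 2))
    (hP : ∀ p, P p ∈ C ∧ ∀ q ∈ C, dist (P p) p ≤ dist q p)
    (p : EuclideanSpace ℝ (Fin 2)) (h : 0 < p i) :
    (P p i = 0 ∧ ∀ j, j ≠ i → P p j = p j) ∧ Metric.infDist p C = p i := by
  classical
  set c : EuclideanSpace ℝ (Fin 2) := WithLp.toLp 2 (fun j => if j = i then 0 else p j) with hc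
  have hcmem : c ∈ C := by rw [hC]; simp [hc]
  have hsum : (c 0 - p 0)^2 + (c 1 - p 1)^2 = p i ^ 2 := by
    fin_cases i <;> simp [hc]
  have hdistc : dist c p = p i := by
    rw [dist_formula, hsum, Real.sqrt_sq h.le]
  have hle : dist (P p) p ≤ p i := hdistc ▸ (hP p).2 c hcmem
  have hge : p i ≤ dist (P p) p :=
    coord_lb _ _ i (by have := (hP p).1; rw [hC] at this; exact this) h.le
  have heq : dist (P p) p = p i := le_antisymm hle hge
  have hPi : P p i ≤ 0 := by have := (hP p).1; rwa [hC] at this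
  have hsq : (P p 0 - p 0)^2 + (P p 1 - p 1)^2 = (p i)^2 := by
    have h1 := heq
    rw [dist_formula] at h1
    have h2 : ((P p 0 - p 0)^2 + (P p 1 - p 1)^2) =
        (Real.sqrt ((P p 0 - p 0)^2 + (P p 1 - p 1)^2))^2 := by
      rw [Real.sq_sqrt (by positivity)]
    rw [h2, h1]
  constructor
  · fin_cases i <;> simp at hPi hsq h ⊢
    · constructor
      · nlinarith [sq_nonneg (P p 1 - p 1), sq_nonneg (P p 0)]
      · nlinarith [sq_nonneg (P p 0), sq_nonneg (P p 1 - p 1)]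
    · constructor
      · nlinarith [sq_nonneg (P p 0 - p 0), sq_nonneg (P p 1)]
      · nlinarith [sq_nonneg (P p 1), sq_nonneg (P p 0 - p 0)]
  · refine le_antisymm ?_ ?_
    · calc Metric.infDist p C ≤ dist p c := Metric.infDist_le_dist_of_mem hcmem
        _ = p i := by rw [dist_comm]; exact hdistc
    · by_contra hlt
      push_neg at hlt
      obtain ⟨y, hy, hylt⟩ := (Metric.infDist_lt_iff ⟨c, hcmem⟩).1 hlt
      have := coord_lb y p i (by rw [hC] at hy; exact hy) h.le
      rw [dist_comm] at hylt
      linarith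

lemma quarter_pow (n : ℕ) : (1/4:ℝ)^n = 1/2^(2*n) := by
  rw [div_pow, one_pow, show (4:ℝ) = 2^2 by norm_num, ← pow_mul]

lemma quarter_step (n : ℕ) : ((1/4:ℝ)^(n+1) - 1/2^(2*n+3))/2 = (1/4:ℝ)^(n+2) := by
  rw [quarter_pow, quarter_pow, show 2*(n+1) = 2*n+2 from by ring,
    show 2*(n+2) = 2*n+4 from by ring, pow_add, pow_add, pow_add]
  have h : (0:ℝ) < 2^(2*n) := by positivity
  field_simp
  ring

/-- Example A.1: the relaxed alternating projection method (with relaxation `1/2`) applied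
to the two halfplanes `C₁ = {x ≤ 0}`, `C₂ = {y ≤ 0}` in `ℝ²` with the non-monotone
overrelaxations `r_k` (used without the correction-step counter) never reaches
`C₁ ∩ C₂`, although `r_k → 0` and `∑ r_k = ∞`. -/
theorem stmt18
    (C1 C2 : Set (EuclideanSpace ℝ (Fin 2)))
    (hC1 : C1 = {p | p 0 ≤ 0}) (hC2 : C2 = {p | p 1 ≤ 0})
    (P1 P2 : EuclideanSpace ℝ (Fin 2) → EuclideanSpace ℝ (Fin 2))
    (hP1 : ∀ p, P1 p ∈ C1 ∧ ∀ q ∈ C1, dist (P1 p) p ≤ dist q p)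
    (hP2 : ∀ p, P2 p ∈ C2 ∧ ∀ q ∈ C2, dist (P2 p) p ≤ dist q p)
    (r : ℕ → ℝ)
    (hr : ∀ k, r k = if Even k then 1 / ((k : ℝ) + 1) else 1 / 2 ^ k)
    (v : ℕ → EuclideanSpace ℝ (Fin 2))
    (hv0 : v 0 = !₂[1, 1])
    (hvrec : ∀ k, v k ∉ (if Even k then C1 else C2) →
      v (k + 1) = v k +
        ((r k + Metric.infDist (v k) (if Even k then C1 else C2)) /
            (2 * Metric.infDist (v k) (if Even k then C1 else C2))) •
          ((if Even k then P1 else P2) (v k) - v k))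
    (hvrec' : ∀ k, v k ∈ (if Even k then C1 else C2) → v (k + 1) = v k) :
    Filter.Tendsto r Filter.atTop (nhds 0) ∧
    Filter.Tendsto (fun n => ∑ k ∈ Finset.range n, r k) Filter.atTop Filter.atTop ∧
    (∀ k, v k ∉ C1 ∩ C2) ∧
    (∀ k, 1 ≤ k → v k 0 = 0) ∧
    (∀ k : ℕ, 1 ≤ k →
      v (2 * k - 1) 1 = v (2 * k - 2) 1 ∧
      v (2 * k) 1 = 1 / 2 ^ (2 * k) ∧ 0 < v (2 * k) 1) := by
  -- odd step computation
  have step_odd : ∀ k b, ¬ Even k → v k = !₂[0, b] → 0 < b →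
      v (k+1) = !₂[(0:ℝ), (b - r k)/2] := by
    intro k b hk hvk hb
    have hb1 : (v k) 1 = b := by rw [hvk]; simp
    have hb0 : (v k) 0 = 0 := by rw [hvk]; simp
    have hchar := proj_char C2 1 hC2 P2 hP2 (v k) (by rw [hb1]; exact hb)
    have hmem : v k ∉ (if Even k then C1 else C2) := by
      rw [if_neg hk, hC2]
      intro hmem'
      have : v k 1 ≤ 0 := hmem'
      linarith [hb1 ▸ this]
    have hrec := hvrec k hmem
    simp only [if_neg hk] at hrec
    rw [hchar.2, hb1] at hrec
    rw [hrec]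
    ext i
    fin_cases i
    · show (v k + _ • (P2 (v k) - v k)) 0 = _
      rw [PiLp.add_apply, PiLp.smul_apply, PiLp.sub_apply,
        hchar.1.2 0 (by decide), hb0]
      simp
    · show (v k + _ • (P2 (v k) - v k)) 1 = _
      rw [PiLp.add_apply, PiLp.smul_apply, PiLp.sub_apply, hchar.1.1, hb1]
      show b + (r k + b)/(2*b) * (0 - b) = (b - r k)/2
      field_simp
      ring
  -- even step: stays put
  have step_even : ∀ k b, Even k → v k = !₂[0, b] → v (k+1) = v k := by
    intro k b hk hvk
    apply hvrec' k
    rw [if_pos hk, hC1]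
    show v k 0 ≤ 0
    rw [hvk]; simp
  -- v 1
  have hv1 : v 1 = !₂[(0:ℝ), 1] := by
    have h0 : (v 0) 0 = 1 := by rw [hv0]; simp
    have h1 : (v 0) 1 = 1 := by rw [hv0]; simp
    have hchar := proj_char C1 0 hC1 P1 hP1 (v 0) (by rw [h0]; norm_num)
    have hmem : v 0 ∉ (if Even 0 then C1 else C2) := by
      rw [if_pos Even.zero, hC1]
      intro hmem'
      have : v 0 0 ≤ 0 := hmem'
      rw [h0] at this; norm_num at this
    have hrec := hvrec 0 hmem
    simp only [if_pos Even.zero] at hrec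
    rw [hchar.2, h0] at hrec
    have hr0 : r 0 = 1 := by rw [hr]; norm_num
    rw [hrec, hr0]
    ext i
    fin_cases i
    · show (v 0 + _ • (P1 (v 0) - v 0)) 0 = _
      rw [PiLp.add_apply, PiLp.smul_apply, PiLp.sub_apply, hchar.1.1, h0]
      norm_num
    · show (v 0 + _ • (P1 (v 0) - v 0)) 1 = _
      rw [PiLp.add_apply, PiLp.smul_apply, PiLp.sub_apply, hchar.1.2 1 (by decide), h1]
      norm_num
  -- main induction
  have key : ∀ m : ℕ, v (2*m+1) = !₂[(0:ℝ), (1/4:ℝ)^m] ∧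
      v (2*m+2) = !₂[(0:ℝ), (1/4:ℝ)^(m+1)] := by
    intro m
    induction m with
    | zero =>
      have hv1' : v 1 = !₂[(0:ℝ), (1/4:ℝ)^0] := by rw [hv1]; norm_num
      refine ⟨hv1', ?_⟩
      have hstep := step_odd 1 1 (by decide) (by rw [hv1]) one_pos
      have hr1 : r 1 = 1/2 := by rw [hr]; norm_num
      rw [hstep, hr1]
      norm_num
    | succ n ih =>
      have h3 : v (2*n+3) = v (2*n+2) :=
        step_even (2*n+2) ((1/4:ℝ)^(n+1)) ⟨n+1, by ring⟩ ih.2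
      have hodd : v (2*(n+1)+1) = !₂[(0:ℝ), (1/4:ℝ)^(n+1)] := by
        rw [show 2*(n+1)+1 = 2*n+3 from by ring, h3, ih.2]
      refine ⟨hodd, ?_⟩
      have hb : (0:ℝ) < (1/4:ℝ)^(n+1) := by positivity
      have hne : ¬ Even (2*n+3) := by simp [Nat.even_add_one, parity_simps]
      have hstep := step_odd (2*n+3) ((1/4:ℝ)^(n+1))
        hne (by rw [h3]; exact ih.2) hb
      rw [show 2*(n+1)+2 = 2*n+3+1 from by ring, hstep, hr, if_neg hne, quarter_step n]
  have hvodd : ∀ m, v (2*m+1) 1 = (1/4:ℝ)^m := by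
    intro m; rw [(key m).1]; simp
  have hveven : ∀ m, v (2*m) 1 = (1/4:ℝ)^m := by
    intro m
    cases m with
    | zero => rw [hv0]; simp
    | succ n =>
      rw [show 2*(n+1) = 2*n+2 from by ring, (key n).2]
      simp
  have hpos1 : ∀ k, 1 ≤ k → 0 < v k 1 := by
    intro k hk
    rcases Nat.even_or_odd k with ⟨m, hm⟩ | ⟨m, hm⟩
    · subst hm
      rw [show m + m = 2*m from by ring, hveven]
      positivity
    · subst hm
      rw [hvodd]
      positivity
  refine ⟨?_, ?_, ?_, ?_, ?_⟩
  · -- r → 0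
    apply squeeze_zero (g := fun k : ℕ => 1/((k:ℝ)+1))
    · intro k; rw [hr]; split_ifs <;> positivity
    · intro k; rw [hr]; split_ifs with h
      · exact le_refl _
      · apply one_div_le_one_div_of_le (by positivity)
        have hk := Nat.lt_two_pow_self (n := k)
        have : ((k+1 : ℕ) : ℝ) ≤ ((2^k : ℕ) : ℝ) := by exact_mod_cast hk
        push_cast at this
        linarith
    · exact tendsto_one_div_add_atTop_nhds_zero_nat
  · -- divergence
    have hrnn : ∀ k, 0 ≤ r k := by intro k; rw [hr]; split_ifs <;> positivity
    have hlow : ∀ n, (1/2:ℝ) * ∑ m ∈ range n, 1/((m:ℝ)+1) ≤ ∑ k ∈ range (2*n), r k := by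
      intro n
      induction n with
      | zero => simp
      | succ n ih =>
        rw [show 2*(n+1) = (2*n+1)+1 from by ring, Finset.sum_range_succ,
          Finset.sum_range_succ, Finset.sum_range_succ, mul_add]
        have h2n : (1/2:ℝ) * (1/((n:ℝ)+1)) ≤ r (2*n) := by
          rw [hr, if_pos ⟨n, by ring⟩]
          have e : (1/2:ℝ) * (1/((n:ℝ)+1)) = 1/(2*(n:ℝ)+2) := by
            rw [one_div_mul_one_div]
            ring_nf
          rw [e]
          apply one_div_le_one_div_of_le (by positivity)
          push_cast
          linarith
        have := hrnn (2*n+1)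
        linarith
    rw [Filter.tendsto_atTop_atTop]
    intro b
    obtain ⟨N, hN⟩ := (Real.tendsto_sum_range_one_div_nat_succ_atTop.eventually_ge_atTop
      (2*b)).exists
    refine ⟨2*N, fun n hn => ?_⟩
    have h1 : b ≤ ∑ k ∈ range (2*N), r k := by
      have := hlow N
      linarith
    calc b ≤ ∑ k ∈ range (2*N), r k := h1
      _ ≤ ∑ k ∈ range n, r k :=
        Finset.sum_le_sum_of_subset_of_nonneg (Finset.range_subset_range.2 hn)
          (fun i _ _ => hrnn i)
  · -- never in C1 ∩ C2
    intro k
    cases k with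
    | zero =>
      rw [hv0, hC1]
      rintro ⟨h1', _⟩
      have : (!₂[1, 1] : EuclideanSpace ℝ (Fin 2)) 0 ≤ 0 := h1'
      norm_num at this
    | succ n =>
      rw [hC2]
      rintro ⟨_, h2'⟩
      have h2'' : v (n+1) 1 ≤ 0 := h2'
      linarith [hpos1 (n+1) (by omega)]
  · -- first coordinate zero
    intro k hk
    rcases Nat.even_or_odd k with ⟨m, hm⟩ | ⟨m, hm⟩
    · subst hm
      have hm1 : 1 ≤ m := by omega
      obtain ⟨n, rfl⟩ : ∃ n, m = n + 1 := ⟨m - 1, by omega⟩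
      rw [show (n+1) + (n+1) = 2*n+2 from by ring, (key n).2]
      simp
    · subst hm
      rw [show 2*m+1 = 2*m+1 from rfl, (key m).1]
      simp
  · -- final bullet
    intro k hk
    obtain ⟨m, rfl⟩ : ∃ m, k = m + 1 := ⟨k - 1, by omega⟩
    have e1 : 2*(m+1)-1 = 2*m+1 := by omega
    have e2 : 2*(m+1)-2 = 2*m := by omega
    refine ⟨?_, ?_, ?_⟩
    · rw [e1, e2, hvodd m, hveven m]
    · rw [hveven (m+1), quarter_pow]
    · rw [hveven (m+1)]
      positivity
end

section
/- Define real sequences {b_k}_{k=0}^∞ and {x_k}_{k=0}^∞ by b_0 := 1/2, b_{k+1} := b_k / (2√2/√(b_k) + 4)², and x_0 := 2, x_{k+1} := (x_k² + 1 − b_k)/(2 x_k). Then: (a) b_k > 0 and b_{k+1} ≤ b_k/16 for all k, so b_k → 0; and (b) x_k = 1 + √(2 b_k) for every k = 0,1,2,…, so in particular x_k > 1 for all k. -/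
/-- The auxiliary sequences from the counterexample: `b₀ = 1/2`,
`b_{k+1} = b_k/(2√2/√b_k + 4)²`, `x₀ = 2`, `x_{k+1} = (x_k² + 1 − b_k)/(2x_k)`.
Then `b_k > 0`, `b_{k+1} ≤ b_k/16`, `b_k → 0`, and `x_k = 1 + √(2b_k) > 1` for all `k`. -/
theorem stmt19 (b x : ℕ → ℝ)
    (hb0 : b 0 = 1 / 2)
    (hbrec : ∀ k, b (k + 1) = b k / (2 * Real.sqrt 2 / Real.sqrt (b k) + 4) ^ 2)
    (hx0 : x 0 = 2)
    (hxrec : ∀ k, x (k + 1) = (x k ^ 2 + 1 - b k) / (2 * x k)) :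
    (∀ k, 0 < b k ∧ b (k + 1) ≤ b k / 16) ∧
      Filter.Tendsto b Filter.atTop (nhds 0) ∧
      (∀ k, x k = 1 + Real.sqrt (2 * b k)) ∧
      (∀ k, 1 < x k) := by
  have hbpos : ∀ k, 0 < b k := by
    intro k
    induction k with
    | zero => rw [hb0]; norm_num
    | succ n ih =>
      rw [hbrec n]
      apply div_pos ih
      have h1 : 0 ≤ 2 * Real.sqrt 2 / Real.sqrt (b n) := by positivity
      nlinarith
  have hb16 : ∀ k, b (k + 1) ≤ b k / 16 := by
    intro k
    rw [hbrec k]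
    have h1 : 0 ≤ 2 * Real.sqrt 2 / Real.sqrt (b k) := by positivity
    have h2 : (16 : ℝ) ≤ (2 * Real.sqrt 2 / Real.sqrt (b k) + 4) ^ 2 := by nlinarith
    have := (hbpos k).le
    gcongr
  have hxeq : ∀ k, x k = 1 + Real.sqrt (2 * b k) := by
    intro k
    induction k with
    | zero =>
      rw [hx0, hb0]
      norm_num [Real.sqrt_one]
    | succ n ih =>
      have hbn := hbpos n
      set s := Real.sqrt (2 * b n) with hs
      have hs0 : 0 ≤ s := Real.sqrt_nonneg _
      have hs2 : s ^ 2 = 2 * b n := Real.sq_sqrt (by linarith)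
      have hsb : Real.sqrt 2 / Real.sqrt (b n) = s / b n := by
        rw [hs, Real.sqrt_mul (by norm_num)]
        rw [div_eq_div_iff (Real.sqrt_pos.mpr hbn).ne' hbn.ne', mul_comm,
          mul_assoc, Real.mul_self_sqrt hbn.le]
        ring
      have hspos : 0 < s := Real.sqrt_pos.mpr (by linarith)
      have key : 2 * b (n + 1) = (b n / (2 * (1 + s))) ^ 2 := by
        rw [hbrec n, mul_div_assoc, hsb]
        have h1s : (1 : ℝ) + s ≠ 0 := by positivity
        have hden : 2 * (s / b n) + 4 ≠ 0 := by positivity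
        field_simp
        linear_combination (4 * (2 * b n - 1)) * hs2
      have hx1 : x (n + 1) = 1 + b n / (2 * (1 + s)) := by
        rw [hxrec n, ih]
        have h1s : (1 : ℝ) + s ≠ 0 := by positivity
        field_simp
        nlinarith [hs2]
      rw [hx1, key, Real.sqrt_sq (by positivity)]
  have hxgt : ∀ k, 1 < x k := by
    intro k
    rw [hxeq k]
    have : 0 < Real.sqrt (2 * b k) := Real.sqrt_pos.mpr (by linarith [hbpos k])
    linarith
  refine ⟨fun k => ⟨hbpos k, hb16 k⟩, ?_, hxeq, hxgt⟩
  have hbound : ∀ k, b k ≤ (1 / 2) * (1 / 16) ^ k := by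
    intro k
    induction k with
    | zero => simp [hb0]
    | succ n ih =>
      calc b (n + 1) ≤ b n / 16 := hb16 n
        _ ≤ ((1 / 2) * (1 / 16) ^ n) / 16 := by linarith
        _ = (1 / 2) * (1 / 16) ^ (n + 1) := by ring
  have hgeo : Filter.Tendsto (fun k => (1 / 2 : ℝ) * (1 / 16) ^ k) Filter.atTop (nhds 0) := by
    have := tendsto_pow_atTop_nhds_zero_of_lt_one (by norm_num : (0:ℝ) ≤ 1/16) (by norm_num : (1/16:ℝ) < 1)
    simpa using this.const_mul (1 / 2 : ℝ)
  exact squeeze_zero (fun k => (hbpos k).le) hbound hgeo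
end
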